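/- For a nonnegative random variable X and an independent nonnegative random variable I and constant σ² > 0, E[ln(1 + X/(I+σ²))] = ∫_0^∞ (1/t)·E[(1 − e^{−tX}) e^{−tI}]·e^{−σ²t} dt. -/

import Mathlib

open Real MeasureTheory
open Set

lemma exp_int {c : ℝ} (hc : 0 < c) : ∫ t in Ioi (0:ℝ), Real.exp (-(c*t)) = 1/c := by
  have := integral_comp_mul_left_Ioi (fun x => Real.exp (-x)) 0 hc
  simp only [mul_zero, smul_eq_mul] at this
  rw [this, integral_exp_neg_Ioi_zero]
  simp [one_div]

lemma ioc_int {t x a : ℝ} (ht : 0 < t) (hx : 0 ≤ x) :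
    ∫ s in Ioc (0:ℝ) x, Real.exp (-(t*(s+a)))
      = (1/t) * (1 - Real.exp (-(t*x))) * Real.exp (-(t*a)) := by
  rw [← intervalIntegral.integral_of_le hx]
  have key : ∀ s ∈ uIcc (0:ℝ) x, HasDerivAt (fun s => -(1/t) * Real.exp (-(t*(s+a))))
      (Real.exp (-(t*(s+a)))) s := by
    intro s _
    have h1 : HasDerivAt (fun s : ℝ => -(t*(s+a))) (-t) s := by
      have := ((hasDerivAt_id s).add_const a).const_mul t
      have h := this.neg; rw [mul_one] at h; exact h
    have := (h1.exp).const_mul (-(1/t))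
    refine this.congr_deriv ?_
    have ht0 : t ≠ 0 := ht.ne'
    have e : t⁻¹ * t = 1 := inv_mul_cancel₀ ht0
    linear_combination (Real.exp (-(t*(s+a)))) * e
  rw [intervalIntegral.integral_eq_sub_of_hasDerivAt key]
  · have e1 : Real.exp (-(t*(x+a))) = Real.exp (-(t*x)) * Real.exp (-(t*a)) := by
      rw [← Real.exp_add]; ring_nf
    simp only [zero_add, e1]
    ring
  · exact (Real.continuous_exp.comp (by continuity)).intervalIntegrable 0 x

lemma onediv_int {x a : ℝ} (hx : 0 ≤ x) (ha : 0 < a) :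
    ∫ s in Ioc (0:ℝ) x, 1/(s+a) = Real.log (1 + x/a) := by
  rw [← intervalIntegral.integral_of_le hx]
  have key : ∀ s ∈ uIcc (0:ℝ) x, HasDerivAt (fun s => Real.log (s+a)) (1/(s+a)) s := by
    intro s hs
    have hs0 : 0 ≤ s := by
      rcases hs with ⟨h1, _⟩; simpa [hx] using h1
    have hne : s + a ≠ 0 := by positivity
    have := ((hasDerivAt_id s).add_const a).log hne
    simpa [one_div] using this
  rw [intervalIntegral.integral_eq_sub_of_hasDerivAt key]
  · rw [zero_add, ← Real.log_div (by positivity) (by positivity)]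
    rw [add_comm]
    field_simp
  · apply ContinuousOn.intervalIntegrable
    apply ContinuousOn.div continuousOn_const (by fun_prop)
    intro s hs
    have hs0 : 0 ≤ s := by
      rcases hs with ⟨h1, _⟩; simpa [hx] using h1
    positivity

lemma one_sub_exp_le {u : ℝ} : 1 - Real.exp (-u) ≤ u := by
  have := Real.add_one_le_exp (-u)
  linarith

lemma frullani {x a : ℝ} (hx : 0 ≤ x) (ha : 0 < a) :
    ∫ t in Ioi (0:ℝ), (1/t) * (1 - Real.exp (-(t*x))) * Real.exp (-(t*a))
      = Real.log (1 + x/a) := by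
  set G : ℝ → ℝ := fun t => (1/t) * (1 - Real.exp (-(t*x))) * Real.exp (-(t*a)) with hG
  have hGnn : ∀ t ∈ Ioi (0:ℝ), 0 ≤ G t := by
    intro t ht
    have ht' : (0:ℝ) < t := ht
    have h1 : Real.exp (-(t*x)) ≤ 1 := Real.exp_le_one_iff.mpr (by nlinarith)
    have : (0:ℝ) ≤ 1/t := by positivity
    exact mul_nonneg (mul_nonneg this (by linarith)) (Real.exp_pos _).le
  have hGmeas : AEStronglyMeasurable G (volume.restrict (Ioi (0:ℝ))) := by
    apply ContinuousOn.aestronglyMeasurable _ measurableSet_Ioi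
    apply ContinuousOn.mul
    apply ContinuousOn.mul
    · exact continuousOn_const.div continuousOn_id (fun t ht => ne_of_gt ht)
    · fun_prop
    · fun_prop
  -- main computation via lintegrals
  have e1 : ∫ t in Ioi (0:ℝ), G t
      = (∫⁻ t in Ioi (0:ℝ), ENNReal.ofReal (G t)).toReal := by
    apply integral_eq_lintegral_of_nonneg_ae _ hGmeas
    exact (ae_restrict_iff' measurableSet_Ioi).mpr (.of_forall hGnn)
  have e2 : ∀ t ∈ Ioi (0:ℝ), ENNReal.ofReal (G t)
      = ∫⁻ s in Ioc (0:ℝ) x, ENNReal.ofReal (Real.exp (-(t*(s+a)))) := by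
    intro t ht
    rw [hG]
    simp only [← ioc_int ht hx]
    rw [ofReal_integral_eq_lintegral_ofReal]
    · exact (Real.continuous_exp.comp (by continuity)).integrableOn_Ioc
    · exact .of_forall fun s => (Real.exp_pos _).le
  have hmeas2 : Measurable (fun p : ℝ × ℝ => ENNReal.ofReal (Real.exp (-(p.1*(p.2+a))))) := by
    fun_prop
  have e3 : (∫⁻ t in Ioi (0:ℝ), ∫⁻ s in Ioc (0:ℝ) x, ENNReal.ofReal (Real.exp (-(t*(s+a)))))
      = ∫⁻ s in Ioc (0:ℝ) x, ∫⁻ t in Ioi (0:ℝ), ENNReal.ofReal (Real.exp (-(t*(s+a)))) :=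
    lintegral_lintegral_swap hmeas2.aemeasurable
  have e4 : ∀ s ∈ Ioc (0:ℝ) x, (∫⁻ t in Ioi (0:ℝ), ENNReal.ofReal (Real.exp (-(t*(s+a)))))
      = ENNReal.ofReal (1/(s+a)) := by
    intro s hs
    have hsa : 0 < s + a := by linarith [hs.1]
    rw [← ofReal_integral_eq_lintegral_ofReal]
    · congr 1
      rw [← exp_int hsa]
      congr 1; ext t; ring_nf
    · have := exp_neg_integrableOn_Ioi 0 hsa
      apply this.congr_fun _ measurableSet_Ioi
      intro t _; ring_nf
    · exact .of_forall fun t => (Real.exp_pos _).le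
  have e5 : (∫⁻ s in Ioc (0:ℝ) x, ENNReal.ofReal (1/(s+a)))
      = ENNReal.ofReal (Real.log (1 + x/a)) := by
    rw [← ofReal_integral_eq_lintegral_ofReal, onediv_int hx ha]
    · have hc : ContinuousOn (fun s : ℝ => 1/(s+a)) (Icc 0 x) :=
        continuousOn_const.div (by fun_prop) (fun s hs => by have := hs.1; positivity)
      exact (hc.integrableOn_Icc).mono_set Ioc_subset_Icc_self
    · exact (ae_restrict_iff' measurableSet_Ioc).mpr
        (.of_forall fun s hs => by have := hs.1; positivity)
  rw [e1, setLIntegral_congr_fun measurableSet_Ioi e2, e3,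
    setLIntegral_congr_fun measurableSet_Ioc e4, e5, ENNReal.toReal_ofReal]
  apply Real.log_nonneg
  have : 0 ≤ x/a := by positivity
  linarith

/-- Hamdi's lemma: for nonnegative random variables `X`, `I` and `σ² > 0`,
`E[ln(1 + X/(I+σ²))] = ∫_0^∞ (1/t)·E[(1 − e^{−tX}) e^{−tI}]·e^{−σ²t} dt`. -/
theorem stmt_9 {Ω : Type*} [MeasureSpace Ω] (μ : Measure Ω) [IsProbabilityMeasure μ]
    (X I : Ω → ℝ) (hX : Measurable X) (hI : Measurable I)
    (hXnn : ∀ ω, 0 ≤ X ω) (hInn : ∀ ω, 0 ≤ I ω) (σ2 : ℝ) (hσ : 0 < σ2)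
    (hint : Integrable (fun ω => Real.log (1 + X ω / (I ω + σ2))) μ) :
    (∫ ω, Real.log (1 + X ω / (I ω + σ2)) ∂μ)
      =
    ∫ t in Set.Ioi (0 : ℝ),
      (1 / t) * (∫ ω, (1 - Real.exp (-(t * X ω))) * Real.exp (-(t * I ω)) ∂μ) *
        Real.exp (-(σ2 * t)) := by
  have hIσ : ∀ ω, 0 < I ω + σ2 := fun ω => by have := hInn ω; linarith
  set F : Ω → ℝ := fun ω => Real.log (1 + X ω / (I ω + σ2)) with hF
  have hFnn : ∀ ω, 0 ≤ F ω := fun ω => Real.log_nonneg (by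
    have : 0 ≤ X ω / (I ω + σ2) := div_nonneg (hXnn ω) (hIσ ω).le
    linarith)
  set g : ℝ → Ω → ℝ := fun t ω =>
    (1/t) * (1 - Real.exp (-(t * X ω))) * Real.exp (-(t * I ω)) * Real.exp (-(σ2 * t)) with hg
  have hexp : ∀ t ω, Real.exp (-(t * I ω)) * Real.exp (-(σ2 * t))
      = Real.exp (-(t * (I ω + σ2))) := by
    intro t ω; rw [← Real.exp_add]; ring_nf
  have hgnn : ∀ ω, ∀ t ∈ Ioi (0:ℝ), 0 ≤ g t ω := by
    intro ω t ht
    have ht' : (0:ℝ) < t := ht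
    have h1 : Real.exp (-(t * X ω)) ≤ 1 := Real.exp_le_one_iff.mpr (by nlinarith [hXnn ω])
    have h2 : (0:ℝ) ≤ 1/t := by positivity
    exact mul_nonneg (mul_nonneg (mul_nonneg h2 (by linarith)) (Real.exp_pos _).le)
      (Real.exp_pos _).le
  have hpt : ∀ ω, ∫ t in Ioi (0:ℝ), g t ω = F ω := by
    intro ω
    simp only [hF]
    rw [← frullani (hXnn ω) (hIσ ω)]
    congr 1; ext t
    rw [hg]; dsimp only
    rw [mul_assoc, hexp]
  have hgint : ∀ ω, IntegrableOn (fun t => g t ω) (Ioi 0) := by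
    intro ω
    apply Integrable.mono' (g := fun t => X ω * Real.exp (-(σ2 * t)))
    · exact IntegrableOn.congr_fun ((exp_neg_integrableOn_Ioi 0 hσ).const_mul (X ω))
        (fun t _ => by ring_nf) measurableSet_Ioi
    · apply ContinuousOn.aestronglyMeasurable _ measurableSet_Ioi
      apply ContinuousOn.mul
      apply ContinuousOn.mul
      apply ContinuousOn.mul
      · exact continuousOn_const.div continuousOn_id (fun t ht => ne_of_gt ht)
      all_goals fun_prop
    · apply (ae_restrict_iff' measurableSet_Ioi).mpr
      apply ae_of_all
      intro t ht
      have ht' : (0:ℝ) < t := ht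
      rw [Real.norm_of_nonneg (hgnn ω t ht)]
      have h1 : 1 - Real.exp (-(t * X ω)) ≤ t * X ω := one_sub_exp_le
      have h2 : Real.exp (-(t * I ω)) ≤ 1 := Real.exp_le_one_iff.mpr (by nlinarith [hInn ω])
      have h3 : 0 ≤ 1 - Real.exp (-(t * X ω)) := by
        have := Real.exp_le_one_iff.mpr (show -(t * X ω) ≤ 0 by nlinarith [hXnn ω])
        linarith
      have h4 : (1/t) * (1 - Real.exp (-(t * X ω))) * Real.exp (-(t * I ω)) ≤ X ω := by
        calc (1/t) * (1 - Real.exp (-(t * X ω))) * Real.exp (-(t * I ω))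
            ≤ (1/t) * (1 - Real.exp (-(t * X ω))) * 1 :=
              mul_le_mul_of_nonneg_left h2 (by positivity)
          _ = (1/t) * (1 - Real.exp (-(t * X ω))) := mul_one _
          _ ≤ (1/t) * (t * X ω) := mul_le_mul_of_nonneg_left h1 (by positivity)
          _ = X ω := by field_simp
      have := mul_le_mul_of_nonneg_right h4 (Real.exp_pos (-(σ2 * t))).le
      simpa [hg] using this
  -- product measurability
  have hprod : Measurable (fun p : Ω × ℝ => ENNReal.ofReal (g p.2 p.1)) := by
    apply Measurable.ennreal_ofReal
    rw [hg]; dsimp only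
    fun_prop
  -- LHS
  have eL : ∫ ω, F ω ∂μ = (∫⁻ ω, ENNReal.ofReal (F ω) ∂μ).toReal :=
    integral_eq_lintegral_of_nonneg_ae (ae_of_all _ hFnn) hint.aestronglyMeasurable
  have eL2 : ∀ ω, ENNReal.ofReal (F ω) = ∫⁻ t in Ioi (0:ℝ), ENNReal.ofReal (g t ω) := by
    intro ω
    rw [← hpt ω, ofReal_integral_eq_lintegral_ofReal (hgint ω)]
    exact (ae_restrict_iff' measurableSet_Ioi).mpr (ae_of_all _ (hgnn ω))
  have swap : (∫⁻ ω, ∫⁻ t in Ioi (0:ℝ), ENNReal.ofReal (g t ω) ∂(volume) ∂μ)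
      = ∫⁻ t in Ioi (0:ℝ), ∫⁻ ω, ENNReal.ofReal (g t ω) ∂μ :=
    lintegral_lintegral_swap hprod.aemeasurable
  -- RHS
  set p : ℝ → Ω → ℝ := fun t ω => (1 - Real.exp (-(t * X ω))) * Real.exp (-(t * I ω)) with hp
  have hpmeas : ∀ t, AEStronglyMeasurable (p t) μ := by
    intro t; rw [hp]; dsimp only
    exact Measurable.aestronglyMeasurable (by fun_prop)
  have hpint : ∀ t ∈ Ioi (0:ℝ), Integrable (p t) μ := by
    intro t ht
    have ht' : (0:ℝ) < t := ht
    apply Integrable.mono' (integrable_const (1:ℝ)) (hpmeas t)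
    apply ae_of_all
    intro ω
    have h1 : Real.exp (-(t * X ω)) ≤ 1 := Real.exp_le_one_iff.mpr (by nlinarith [hXnn ω])
    have h2 : Real.exp (-(t * I ω)) ≤ 1 := Real.exp_le_one_iff.mpr (by nlinarith [hInn ω])
    have h3 : 0 ≤ 1 - Real.exp (-(t * X ω)) := by linarith
    rw [Real.norm_of_nonneg (mul_nonneg h3 (Real.exp_pos _).le)]
    have : (1 - Real.exp (-(t * X ω))) * Real.exp (-(t * I ω)) ≤ 1 * 1 :=
      mul_le_mul (by nlinarith [Real.exp_pos (-(t * X ω))]) h2 (Real.exp_pos _).le (by linarith)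
    simpa using this
  have hpnn : ∀ t ∈ Ioi (0:ℝ), ∀ ω, 0 ≤ p t ω := by
    intro t ht ω
    have ht' : (0:ℝ) < t := ht
    have h1 : Real.exp (-(t * X ω)) ≤ 1 := Real.exp_le_one_iff.mpr (by nlinarith [hXnn ω])
    exact mul_nonneg (by linarith) (Real.exp_pos _).le
  set h : ℝ → ℝ := fun t => (1/t) * (∫ ω, p t ω ∂μ) * Real.exp (-(σ2 * t)) with hh
  have hhmeas : AEStronglyMeasurable h (volume.restrict (Ioi (0:ℝ))) := by
    have hm : StronglyMeasurable (fun t : ℝ => ∫ ω, p t ω ∂μ) := by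
      apply MeasureTheory.StronglyMeasurable.integral_prod_right'
        (f := fun q : ℝ × Ω => p q.1 q.2)
      apply Measurable.stronglyMeasurable
      rw [hp]; dsimp only; fun_prop
    apply Measurable.aestronglyMeasurable
    rw [hh]
    exact ((measurable_const.div measurable_id).mul hm.measurable).mul (by fun_prop)
  have hhnn : ∀ t ∈ Ioi (0:ℝ), 0 ≤ h t := by
    intro t ht
    have ht' : (0:ℝ) < t := ht
    have : 0 ≤ ∫ ω, p t ω ∂μ := integral_nonneg (hpnn t ht)
    rw [hh]; dsimp only; positivity
  have eR : ∫ t in Ioi (0:ℝ), h t = (∫⁻ t in Ioi (0:ℝ), ENNReal.ofReal (h t)).toReal := by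
    apply integral_eq_lintegral_of_nonneg_ae _ hhmeas
    exact (ae_restrict_iff' measurableSet_Ioi).mpr (ae_of_all _ hhnn)
  have eR2 : ∀ t ∈ Ioi (0:ℝ), ENNReal.ofReal (h t) = ∫⁻ ω, ENNReal.ofReal (g t ω) ∂μ := by
    intro t ht
    have ht' : (0:ℝ) < t := ht
    have hc : (0:ℝ) ≤ (1/t) * Real.exp (-(σ2 * t)) := by positivity
    have e1 : h t = ((1/t) * Real.exp (-(σ2 * t))) * ∫ ω, p t ω ∂μ := by
      rw [hh]; ring
    rw [e1, ENNReal.ofReal_mul hc,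
      ofReal_integral_eq_lintegral_ofReal (hpint t ht) (ae_of_all _ (hpnn t ht)),
      ← lintegral_const_mul _ (by rw [hp]; dsimp only; fun_prop)]
    apply lintegral_congr
    intro ω
    rw [← ENNReal.ofReal_mul hc]
    congr 1
    rw [hg, hp]; dsimp only; ring
  calc ∫ ω, F ω ∂μ = (∫⁻ ω, ENNReal.ofReal (F ω) ∂μ).toReal := eL
    _ = (∫⁻ t in Ioi (0:ℝ), ∫⁻ ω, ENNReal.ofReal (g t ω) ∂μ).toReal := by
        rw [← swap]; congr 1; exact lintegral_congr eL2
    _ = (∫⁻ t in Ioi (0:ℝ), ENNReal.ofReal (h t)).toReal := by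
        congr 1
        exact setLIntegral_congr_fun measurableSet_Ioi (fun t ht => (eR2 t ht).symm)
    _ = ∫ t in Ioi (0:ℝ), h t := eR.symm
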